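/- Let A be an n-DPDA whose input alphabet contains a distinguished symbol ⋆. If R is an infinite run of A reading only ⋆ symbols, then R(i) is a milestone configuration for infinitely many indices i. -/

import Mathlib

namespace HOPDA

/-- Iterated exponentiation `pow` from the paper:
`pow [] = 1`, `pow (m :: l) = (1 + m) ^ pow l - 1`. -/
def pow : List ℕ → ℕ
  | [] => 1
  | m :: l => (1 + m) ^ pow l - 1

/-! ### Higher-order stacks.

Stacks are represented positionlessly (nested lists of symbols); the positions of the
paper are represented by *addresses*: lists of bottom-based indices leading from the
outermost level into the stack.  Equality of contents is positionless equality `≅`. -/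

inductive St (Γ : Type) : Type where
  | leaf (γ : Γ) : St Γ
  | node (l : List (St Γ)) : St Γ

/-- `IsValid k s` : `s` is a stack of order `k` all of whose component stacks are nonempty. -/
def IsValid {Γ : Type} : ℕ → St Γ → Prop
  | 0, St.leaf _ => True
  | 0, St.node _ => False
  | _ + 1, St.leaf _ => False
  | k + 1, St.node l => l ≠ [] ∧ ∀ t ∈ l, IsValid k t

/-- The address of the topmost substack `d` levels below the surface
(indices count from the bottom of each stack, as the positions in the paper do). -/
def topAddr {Γ : Type} : St Γ → ℕ → List ℕ
  | _, 0 => []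
  | St.leaf _, _ + 1 => []
  | St.node l, d + 1 => (l.length - 1) :: topAddr (l.getLastD (St.node [])) d

/-- The substack sitting at a given address. -/
def sub? {Γ : Type} : St Γ → List ℕ → Option (St Γ)
  | s, [] => some s
  | St.leaf _, _ :: _ => none
  | St.node l, i :: p =>
      match l[i]? with
      | some t => sub? t p
      | none => none

/-- Modify the substack at a given address. -/
def modAt {Γ : Type} : St Γ → List ℕ → (St Γ → Option (St Γ)) → Option (St Γ)
  | s, [], f => f s
  | St.leaf _, _ :: _, _ => none
  | St.node l, i :: p, f =>
      match l[i]? with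
      | none => none
      | some t =>
          match modAt t p f with
          | none => none
          | some t' => some (St.node (l.set i t'))

/-- The topmost stack symbol of an order-`n` stack. -/
def topLeaf? {Γ : Type} (n : ℕ) (s : St Γ) : Option Γ :=
  match sub? s (topAddr s n) with
  | some (St.leaf γ) => some γ
  | _ => none

/-- The content of the topmost `k`-stack of an order-`n` stack (`top^k`);
equality of these contents is positionless equality `≅` of topmost `k`-stacks. -/
def topStk {Γ : Type} (n : ℕ) (s : St Γ) (k : ℕ) : Option (St Γ) :=
  sub? s (topAddr s (n - k))

/-- Number of components of the (composite) stack at the given address. -/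
def sizeAt {Γ : Type} (s : St Γ) (p : List ℕ) : ℕ :=
  match sub? s p with
  | some (St.node l) => l.length
  | _ => 0

/-- Remove the topmost component of a composite stack
(defined only when it has at least two components). -/
def popStk {Γ : Type} : St Γ → Option (St Γ)
  | St.node l => if 2 ≤ l.length then some (St.node l.dropLast) else none
  | St.leaf _ => none

/-- Duplicate the topmost `(r-1)`-stack of an `r`-stack,
replacing the topmost symbol of the new copy by `γ`. -/
def dupTop {Γ : Type} (r : ℕ) (γ : Γ) : St Γ → Option (St Γ)
  | St.node l =>
      match l.getLast? with
      | none => none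
      | some t =>
          match modAt t (topAddr t (r - 1)) (fun u =>
            match u with
            | St.leaf _ => some (St.leaf γ)
            | St.node _ => none) with
          | none => none
          | some t' => some (St.node (l ++ [t']))
  | St.leaf _ => none

/-- `push^r_γ` on an order-`n` stack. -/
def pushOp {Γ : Type} (n r : ℕ) (γ : Γ) (s : St Γ) : Option (St Γ) :=
  modAt s (topAddr s (n - r)) (dupTop r γ)

/-- `pop^r` on an order-`n` stack. -/
def popOp {Γ : Type} (n r : ℕ) (s : St Γ) : Option (St Γ) :=
  modAt s (topAddr s (n - r)) popStk

/-- Stack operations of an order-`n` pushdown automaton. -/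
inductive Op (Γ : Type) where
  | pop (k : ℕ)
  | push (k : ℕ) (γ : Γ)

def applyOp {Γ : Type} (n : ℕ) : Op Γ → St Γ → Option (St Γ)
  | Op.pop k, s => if 1 ≤ k ∧ k ≤ n then popOp n k s else none
  | Op.push k γ, s => if 1 ≤ k ∧ k ≤ n then pushOp n k γ s else none

/-- The one-step history function on addresses: for the address of a substack of
`op(s)` it returns the address of the substack of `s` from which it originates. -/
def histStep {Γ : Type} (n : ℕ) : Op Γ → St Γ → List ℕ → List ℕ
  | Op.pop _, _, p => p
  | Op.push r _, s, p =>
      let m := n - r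
      let ta := topAddr s m
      let sz := sizeAt s ta
      if p.take (m + 1) = ta ++ [sz] then p.set m (sz - 1) else p

/-! ### Deterministic order-`n` pushdown automata -/

inductive Trans (A Γ Q : Type) where
  | read (f : A → Q)
  | op (q : Q) (o : Op Γ)

/-- A deterministic order-`n` pushdown automaton. -/
structure DPDA (n : ℕ) (A Γ : Type) where
  Q : Type
  finQ : Finite Q
  qI : Q
  γI : Γ
  F : Set Q
  δ : Q → Γ → Trans A Γ Q
  read_inj : ∀ q γ f, δ q γ = Trans.read f → Function.Injective f

/-- One step of an `n`-DPDA; the label records the letter read (if any). -/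
inductive Step {n : ℕ} {A Γ : Type} (D : DPDA n A Γ) :
    D.Q × St Γ → Option A → D.Q × St Γ → Prop where
  | read {q : D.Q} {s : St Γ} {γ : Γ} {f : A → D.Q} (a : A) :
      IsValid n s → topLeaf? n s = some γ → D.δ q γ = Trans.read f →
      Step D (q, s) (some a) (f a, s)
  | op {q : D.Q} {s s' : St Γ} {γ : Γ} {q' : D.Q} {o : Op Γ} :
      IsValid n s → topLeaf? n s = some γ → D.δ q γ = Trans.op q' o →
      applyOp n o s = some s' →
      Step D (q, s) none (q', s')

/-- A (finite) run `R(0), …, R(len)` of an `n`-DPDA. -/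
structure Run {n : ℕ} {A Γ : Type} (D : DPDA n A Γ) where
  len : ℕ
  cfg : ℕ → D.Q × St Γ
  lab : ℕ → Option A
  ok : ∀ i < len, Step D (cfg i) (lab i) (cfg (i + 1))

namespace Run

variable {n : ℕ} {A Γ : Type} {D : DPDA n A Γ}

/-- The word read by a run. -/
def word (R : Run D) : List A := (List.range R.len).filterMap R.lab

/-- The subrun `R[i,j]`. -/
def sub (R : Run D) (i j : ℕ) : Run D where
  len := min j R.len - i
  cfg := fun t => R.cfg (i + t)
  lab := fun t => R.lab (i + t)
  ok := fun t ht => R.ok (i + t) (by omega)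

/-- The history function of the single step starting at position `j` of the run. -/
def stepHist (R : Run D) (j : ℕ) : List ℕ → List ℕ :=
  match topLeaf? n (R.cfg j).2 with
  | none => id
  | some γ =>
      match D.δ (R.cfg j).1 γ with
      | Trans.read _ => id
      | Trans.op _ o => histStep n o (R.cfg j).2

/-- `histTo R i j p` : the address in `R(i)` of the origin (history) of the substack
of `R(j)` sitting at address `p` (meaningful for `i ≤ j ≤ R.len`). -/
def histTo (R : Run D) (i : ℕ) : ℕ → List ℕ → List ℕ
  | 0, p => p
  | j + 1, p => if j + 1 ≤ i then p else histTo R i j (stepHist R j p)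

/-- A run is `k`-upper when the topmost `k`-stack at its end originates from
the topmost `k`-stack at its start. -/
def IsUpper (R : Run D) (k : ℕ) : Prop :=
  histTo R 0 R.len (topAddr (R.cfg R.len).2 (n - k)) = topAddr (R.cfg 0).2 (n - k)

/-- A run is a `k`-return when the topmost `(k-1)`-stack at its end originates from the
topmost `(k-1)`-stack of `pop^k` of its starting stack, and no suffix is `(k-1)`-upper. -/
def IsReturn (R : Run D) (k : ℕ) : Prop :=
  (histTo R 0 R.len (topAddr (R.cfg R.len).2 (n - (k - 1))) =
    topAddr (R.cfg 0).2 (n - k) ++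
      [sizeAt (R.cfg 0).2 (topAddr (R.cfg 0).2 (n - k)) - 2]) ∧
  ∀ i < R.len, ¬ (R.sub i R.len).IsUpper (k - 1)

end Run

/-- `R` is the composition `S ∘ T` of the runs `S` and `T`. -/
def IsComp {n : ℕ} {A Γ : Type} {D : DPDA n A Γ} (R S T : Run D) : Prop :=
  S.cfg S.len = T.cfg 0 ∧ R.len = S.len + T.len ∧
  (∀ i ≤ S.len, R.cfg i = S.cfg i) ∧ (∀ i < S.len, R.lab i = S.lab i) ∧
  (∀ i ≤ T.len, R.cfg (S.len + i) = T.cfg i) ∧ (∀ i < T.len, R.lab (S.len + i) = T.lab i)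

/-- `Decomp R k r c` : `c 0 < c 1 < … < c r` are the cut points of the (unique)
decomposition of the `k`-upper run `R` into the maximal number of nonempty
`k`-upper runs. -/
def Decomp {n : ℕ} {A Γ : Type} {D : DPDA n A Γ} (R : Run D) (k r : ℕ) (c : ℕ → ℕ) : Prop :=
  c 0 = 0 ∧ c r = R.len ∧ (∀ j < r, c j < c (j + 1)) ∧ (∀ j ≤ r, c j ≤ R.len) ∧
  (∀ j < r, (R.sub (c j) (c (j + 1))).IsUpper k) ∧
  (∀ j < r, ∀ i, c j < i → i < c (j + 1) → ¬ (R.sub i (c (j + 1))).IsUpper k)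

/-- The image under the morphism generated by `φ` of a word. -/
def phiW {A M : Type} [Monoid M] (φ : A → M) (w : List A) : M := (w.map φ).prod

/-- The two `k`-upper runs `R` and `S` are `(k,φ)`-parallel. -/
def Parallel {n : ℕ} {A Γ M : Type} [Monoid M] {D : DPDA n A Γ}
    (φ : A → M) (R S : Run D) (k : ℕ) : Prop :=
  R.IsUpper k ∧ S.IsUpper k ∧
  topStk n (R.cfg R.len).2 k = topStk n (S.cfg S.len).2 k ∧
  ∃ (r : ℕ) (cR cS : ℕ → ℕ), Decomp R k r cR ∧ Decomp S k r cS ∧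
    ∀ j < r,
      phiW φ (R.sub (cR j) (cR (j + 1))).word = phiW φ (S.sub (cS j) (cS (j + 1))).word ∧
      topStk n (R.cfg (cR j)).2 k = topStk n (S.cfg (cS j)).2 k

/-- An infinite run of an `n`-DPDA. -/
structure InfRun {n : ℕ} {A Γ : Type} (D : DPDA n A Γ) where
  cfg : ℕ → D.Q × St Γ
  lab : ℕ → Option A
  ok : ∀ i, Step D (cfg i) (lab i) (cfg (i + 1))

/-- The finite subrun `R[i,j]` of an infinite run. -/
def InfRun.sub {n : ℕ} {A Γ : Type} {D : DPDA n A Γ} (R : InfRun D) (i j : ℕ) : Run D where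
  len := j - i
  cfg := fun t => R.cfg (i + t)
  lab := fun t => R.lab (i + t)
  ok := fun t _ => R.ok (i + t)

/-- A step label reads nothing, or reads the `star` symbol. -/
def OnlyStar {A : Type} (star : A) (o : Option A) : Prop := o = none ∨ o = some star

/-- Milestone configurations. -/
def Milestone {n : ℕ} {A Γ : Type} {D : DPDA n A Γ} (star : A) (c : D.Q × St Γ) : Prop :=
  ∃ R : InfRun D, R.cfg 0 = c ∧ (∀ i, OnlyStar star (R.lab i)) ∧
    ∃ I : Set ℕ, I.Infinite ∧ 0 ∈ I ∧ ∀ i ∈ I, ∀ j ∈ I, i ≤ j → (R.sub i j).IsUpper 0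

/-- The initial order-`n` stack, containing the single symbol `γ`. -/
def initStack (n : ℕ) {Γ : Type} (γ : Γ) : St Γ :=
  Nat.rec (motive := fun _ => St Γ) (St.leaf γ) (fun _ s => St.node [s]) n

def initCfg {n : ℕ} {A Γ : Type} (D : DPDA n A Γ) : D.Q × St Γ := (D.qI, initStack n D.γI)

/-- The language recognized by an `n`-DPDA. -/
def Lang {n : ℕ} {A Γ : Type} (D : DPDA n A Γ) : Set (List A) :=
  { w | ∃ R : Run D, R.cfg 0 = initCfg D ∧ R.word = w ∧ (R.cfg R.len).1 ∈ D.F }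

/-! ### Deterministic order-2 collapsible pushdown automata -/

/-- Stack operations of an order-2 collapsible pushdown automaton. -/
inductive COp (Γ : Type) where
  | pop1
  | pop2
  | push1 (γ : Γ)
  | push2 (γ : Γ)
  | collapse

/-- An order-2 collapsible stack: a list of 1-stacks (topmost first), each a list of
0-stacks (topmost first) storing a symbol and the collapse link (a natural number). -/
abbrev CStk (Γ : Type) := List (List (Γ × ℕ))

/-- Semantics of the order-2 collapsible stack operations. -/
def capply {Γ : Type} : COp Γ → CStk Γ → Option (CStk Γ)
  | COp.pop1, (_ :: x :: t) :: rest => some ((x :: t) :: rest)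
  | COp.pop1, _ => none
  | COp.pop2, _ :: s :: rest => some (s :: rest)
  | COp.pop2, _ => none
  | COp.push1 γ, (x :: t) :: rest => some (((γ, rest.length + 1) :: x :: t) :: rest)
  | COp.push1 _, _ => none
  | COp.push2 γ, ((x, m) :: t) :: rest => some (((γ, m) :: t) :: ((x, m) :: t) :: rest)
  | COp.push2 _, _ => none
  | COp.collapse, ((x, m) :: t) :: rest =>
      if 1 ≤ m - 1 ∧ m - 1 ≤ rest.length + 1 then
        some ((((x, m) :: t) :: rest).drop (rest.length + 1 - (m - 1)))
      else none
  | COp.collapse, _ => none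

/-- The topmost stack symbol of an order-2 collapsible stack. -/
def ctop? {Γ : Type} : CStk Γ → Option Γ
  | ((γ, _) :: _) :: _ => some γ
  | _ => none

inductive CTrans (A Γ Q : Type) where
  | read (f : A → Q)
  | op (q : Q) (o : COp Γ)

/-- A deterministic order-2 collapsible pushdown automaton. -/
structure CPDA2 (A Γ : Type) where
  Q : Type
  finQ : Finite Q
  qI : Q
  γI : Γ
  F : Set Q
  δ : Q → Γ → CTrans A Γ Q
  read_inj : ∀ q γ f, δ q γ = CTrans.read f → Function.Injective f

inductive CStep {A Γ : Type} (D : CPDA2 A Γ) :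
    D.Q × CStk Γ → Option A → D.Q × CStk Γ → Prop where
  | read {q : D.Q} {s : CStk Γ} {γ : Γ} {f : A → D.Q} (a : A) :
      ctop? s = some γ → D.δ q γ = CTrans.read f → CStep D (q, s) (some a) (f a, s)
  | op {q : D.Q} {s s' : CStk Γ} {γ : Γ} {q' : D.Q} {o : COp Γ} :
      ctop? s = some γ → D.δ q γ = CTrans.op q' o → capply o s = some s' →
      CStep D (q, s) none (q', s')

structure CRun {A Γ : Type} (D : CPDA2 A Γ) where
  len : ℕ
  cfg : ℕ → D.Q × CStk Γ
  lab : ℕ → Option A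
  ok : ∀ i < len, CStep D (cfg i) (lab i) (cfg (i + 1))

def CRun.word {A Γ : Type} {D : CPDA2 A Γ} (R : CRun D) : List A :=
  (List.range R.len).filterMap R.lab

def cinitCfg {A Γ : Type} (D : CPDA2 A Γ) : D.Q × CStk Γ := (D.qI, [[(D.γI, 1)]])

/-- The language recognized by a 2-DCPDA. -/
def CLang {A Γ : Type} (D : CPDA2 A Γ) : Set (List A) :=
  { w | ∃ R : CRun D, R.cfg 0 = cinitCfg D ∧ R.word = w ∧ (R.cfg R.len).1 ∈ D.F }

/-! ### The alphabet `{[, ], ⋆, ♯}`, the function `stars`, and the language `U` -/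

inductive Alph : Type where
  | lb    -- the opening bracket [
  | rb    -- the closing bracket ]
  | star  -- ⋆
  | sharp -- ♯
  deriving DecidableEq

instance : Fintype Alph :=
  ⟨{Alph.lb, Alph.rb, Alph.star, Alph.sharp}, fun x => by cases x <;> simp⟩

/-- Processes a word over `{[, ], ⋆}`, keeping the total number of stars read so far and,
for each currently unmatched opening bracket (most recent first), the number of stars
read before it; returns `none` iff some prefix has more `]` than `[`. -/
def starsAux : List Alph → ℕ → List ℕ → Option (List ℕ)
  | [], _, st => some st
  | Alph.star :: w, cnt, st => starsAux w (cnt + 1) st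
  | Alph.lb :: w, cnt, st => starsAux w cnt (cnt :: st)
  | Alph.rb :: w, cnt, st =>
      match st with
      | [] => none
      | _ :: st' => starsAux w cnt st'
  | Alph.sharp :: _, _, _ => none

/-- `stars w` : `0` if some prefix of `w` has more closing than opening brackets, or if
`w` has equally many opening and closing brackets; otherwise the number of `⋆`s in `w`
before the last opening bracket of `w` not matched by a closing bracket. -/
def stars (w : List Alph) : ℕ :=
  match starsAux w 0 [] with
  | some (c :: _) => c
  | _ => 0

/-- The language `U = { w ♯^(stars(w)+1) | w ∈ {[, ], ⋆}* }`. -/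
def U : Set (List Alph) :=
  { u | ∃ w : List Alph, Alph.sharp ∉ w ∧ u = w ++ List.replicate (stars w + 1) Alph.sharp }

/-! ### Tree-generating pushdown systems -/

inductive TTrans (A Γ Q : Type) where
  | branch (a : A) (next : ℕ → Q)
  | op (q : Q) (o : Op Γ)

/-- A deterministic tree-generating order-`n` pushdown system (without collapse)
over the ranked alphabet `(A, rank)`. -/
structure TreePDA (n : ℕ) (A Γ : Type) (rank : A → ℕ) where
  Q : Type
  finQ : Finite Q
  qI : Q
  γI : Γ
  δ : Q → Γ → TTrans A Γ Q
  branch_inj : ∀ q γ a next, δ q γ = TTrans.branch a next →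
      ∀ i j, i < rank a → j < rank a → next i = next j → i = j

/-- One step of a tree-generating `n`-PDS; the label records the child chosen
at a branch step (if any). -/
inductive TStep {n : ℕ} {A Γ : Type} {rank : A → ℕ} (D : TreePDA n A Γ rank) :
    D.Q × St Γ → Option ℕ → D.Q × St Γ → Prop where
  | branch {q : D.Q} {s : St Γ} {γ : Γ} {a : A} {next : ℕ → D.Q} {i : ℕ} :
      IsValid n s → topLeaf? n s = some γ → D.δ q γ = TTrans.branch a next → i < rank a →
      TStep D (q, s) (some i) (next i, s)
  | op {q : D.Q} {s s' : St Γ} {γ : Γ} {q' : D.Q} {o : Op Γ} :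
      IsValid n s → topLeaf? n s = some γ → D.δ q γ = TTrans.op q' o →
      applyOp n o s = some s' →
      TStep D (q, s) none (q', s')

def TReach {n : ℕ} {A Γ : Type} {rank : A → ℕ} (D : TreePDA n A Γ rank) :
    D.Q × St Γ → D.Q × St Γ → Prop :=
  Relation.ReflTransGen (fun c c' => ∃ o, TStep D c o c')

def TOpReach {n : ℕ} {A Γ : Type} {rank : A → ℕ} (D : TreePDA n A Γ rank) :
    D.Q × St Γ → D.Q × St Γ → Prop :=
  Relation.ReflTransGen (fun c c' => TStep D c none c')

/-- `c` is a configuration at which a `branch(a,…)` transition applies. -/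
def TIsBr {n : ℕ} {A Γ : Type} {rank : A → ℕ} (D : TreePDA n A Γ rank)
    (c : D.Q × St Γ) (a : A) : Prop :=
  ∃ γ next, IsValid n c.2 ∧ topLeaf? n c.2 = some γ ∧ D.δ c.1 γ = TTrans.branch a next

/-- `TFollow D c p c'` : starting from the branch configuration `c` and following
the child choices `p` (each branch step being followed by op steps up to the next
branch configuration) one arrives at the branch configuration `c'`. -/
inductive TFollow {n : ℕ} {A Γ : Type} {rank : A → ℕ} (D : TreePDA n A Γ rank) :
    D.Q × St Γ → List ℕ → D.Q × St Γ → Prop where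
  | nil (c : D.Q × St Γ) : TFollow D c [] c
  | cons {c c₁ c₂ c₃ : D.Q × St Γ} {i : ℕ} {p : List ℕ} :
      TStep D c (some i) c₁ → TOpReach D c₁ c₂ → (∃ a, TIsBr D c₂ a) →
      TFollow D c₂ p c₃ → TFollow D c (i :: p) c₃

def tinitCfg {n : ℕ} {A Γ : Type} {rank : A → ℕ} (D : TreePDA n A Γ rank) : D.Q × St Γ :=
  (D.qI, initStack n D.γI)

/-- `D` generates the ranked tree whose labelling function is `t`
(`t p = some a` iff the node at position `p` exists and is labelled `a`). -/
def TGenerates {n : ℕ} {A Γ : Type} {rank : A → ℕ} (D : TreePDA n A Γ rank)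
    (t : List ℕ → Option A) : Prop :=
  (∀ c, TReach D (tinitCfg D) c → ∃ c' a, TReach D c c' ∧ TIsBr D c' a) ∧
  ∃ c₀, TOpReach D (tinitCfg D) c₀ ∧ (∃ a, TIsBr D c₀ a) ∧
    ∀ p a, t p = some a ↔ ∃ c, TFollow D c₀ p c ∧ TIsBr D c a

/-! ### Tree-generating order-2 collapsible pushdown systems -/

inductive CTTrans (A Γ Q : Type) where
  | branch (a : A) (next : ℕ → Q)
  | op (q : Q) (o : COp Γ)

structure CTreePDA (A Γ : Type) (rank : A → ℕ) where
  Q : Type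
  finQ : Finite Q
  qI : Q
  γI : Γ
  δ : Q → Γ → CTTrans A Γ Q
  branch_inj : ∀ q γ a next, δ q γ = CTTrans.branch a next →
      ∀ i j, i < rank a → j < rank a → next i = next j → i = j

inductive CTStep {A Γ : Type} {rank : A → ℕ} (D : CTreePDA A Γ rank) :
    D.Q × CStk Γ → Option ℕ → D.Q × CStk Γ → Prop where
  | branch {q : D.Q} {s : CStk Γ} {γ : Γ} {a : A} {next : ℕ → D.Q} {i : ℕ} :
      ctop? s = some γ → D.δ q γ = CTTrans.branch a next → i < rank a →
      CTStep D (q, s) (some i) (next i, s)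
  | op {q : D.Q} {s s' : CStk Γ} {γ : Γ} {q' : D.Q} {o : COp Γ} :
      ctop? s = some γ → D.δ q γ = CTTrans.op q' o → capply o s = some s' →
      CTStep D (q, s) none (q', s')

def CTReach {A Γ : Type} {rank : A → ℕ} (D : CTreePDA A Γ rank) :
    D.Q × CStk Γ → D.Q × CStk Γ → Prop :=
  Relation.ReflTransGen (fun c c' => ∃ o, CTStep D c o c')

def CTOpReach {A Γ : Type} {rank : A → ℕ} (D : CTreePDA A Γ rank) :
    D.Q × CStk Γ → D.Q × CStk Γ → Prop :=
  Relation.ReflTransGen (fun c c' => CTStep D c none c')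

def CTIsBr {A Γ : Type} {rank : A → ℕ} (D : CTreePDA A Γ rank)
    (c : D.Q × CStk Γ) (a : A) : Prop :=
  ∃ γ next, ctop? c.2 = some γ ∧ D.δ c.1 γ = CTTrans.branch a next

inductive CTFollow {A Γ : Type} {rank : A → ℕ} (D : CTreePDA A Γ rank) :
    D.Q × CStk Γ → List ℕ → D.Q × CStk Γ → Prop where
  | nil (c : D.Q × CStk Γ) : CTFollow D c [] c
  | cons {c c₁ c₂ c₃ : D.Q × CStk Γ} {i : ℕ} {p : List ℕ} :
      CTStep D c (some i) c₁ → CTOpReach D c₁ c₂ → (∃ a, CTIsBr D c₂ a) →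
      CTFollow D c₂ p c₃ → CTFollow D c (i :: p) c₃

def ctinitCfg {A Γ : Type} {rank : A → ℕ} (D : CTreePDA A Γ rank) : D.Q × CStk Γ :=
  (D.qI, [[(D.γI, 1)]])

/-- The order-2 collapsible pushdown system `D` generates the ranked tree whose
labelling function is `t`. -/
def CTGenerates {A Γ : Type} {rank : A → ℕ} (D : CTreePDA A Γ rank)
    (t : List ℕ → Option A) : Prop :=
  (∀ c, CTReach D (ctinitCfg D) c → ∃ c' a, CTReach D c c' ∧ CTIsBr D c' a) ∧
  ∃ c₀, CTOpReach D (ctinitCfg D) c₀ ∧ (∃ a, CTIsBr D c₀ a) ∧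
    ∀ p a, t p = some a ↔ ∃ c, CTFollow D c₀ p c ∧ CTIsBr D c a

/-! ### Auxiliary development for Statement 18 -/

section Stmt18Aux

variable {Γ : Type}

/-- Basic list helper: an element of a list of length `ℓ+1` with prescribed `take ℓ`. -/
lemma list_decomp {α : Type} (q : List α) (ℓ : ℕ) (hq : q.length = ℓ + 1) :
    ∃ c, q = q.take ℓ ++ [c] := by
  induction q generalizing ℓ with
  | nil => simp at hq
  | cons a t ih =>
    cases ℓ with
    | zero =>
      simp at hq
      cases t with
      | nil => exact ⟨a, by simp⟩
      | cons b t' => simp at hq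
    | succ ℓ' =>
      obtain ⟨c, hc⟩ := ih ℓ' (by simpa using hq)
      exact ⟨c, by simpa using congrArg (a :: ·) hc⟩

lemma getLastD_mem {α : Type} (l : List α) (d : α) (h : l ≠ []) : l.getLastD d ∈ l := by
  cases l with
  | nil => simp at h
  | cons a t =>
    have : (a :: t).getLastD d = (a :: t).getLast (by simp) := by
      simp [List.getLastD_eq_getLast?, List.getLast?_eq_getLast]
    rw [this]
    exact List.getLast_mem _

lemma getElem?_length_sub_one {α : Type} (l : List α) (d : α) (h : l ≠ []) :
    l[l.length - 1]? = some (l.getLastD d) := by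
  cases l with
  | nil => simp at h
  | cons a t =>
    have h1 : (a :: t).length - 1 < (a :: t).length := by simp
    rw [List.getElem?_eq_getElem h1]
    congr 1
    have : (a :: t).getLastD d = (a :: t).getLast (by simp) := by
      simp [List.getLastD_eq_getLast?, List.getLast?_eq_getLast]
    rw [this, List.getLast_eq_getElem]

/-- A1: length of `topAddr`. -/
lemma topAddr_length {k : ℕ} {s : St Γ} (hs : IsValid k s) {d : ℕ} (hd : d ≤ k) :
    (topAddr s d).length = d := by
  induction d generalizing s k with
  | zero => simp [topAddr]
  | succ d ih =>
    cases s with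
    | leaf γ =>
      cases k with
      | zero => omega
      | succ k => exact absurd hs (by simp [IsValid])
    | node l =>
      cases k with
      | zero => exact absurd hs (by simp [IsValid])
      | succ k =>
        obtain ⟨hne, hall⟩ := hs
        simp only [topAddr, List.length_cons]
        rw [ih (hall _ (getLastD_mem l _ hne)) (by omega)]

/-- A2: `take` of `topAddr`. -/
lemma topAddr_take (s : St Γ) (d t : ℕ) (h : t ≤ d) :
    (topAddr s d).take t = topAddr s t := by
  induction d generalizing s t with
  | zero => cases Nat.eq_zero_of_le_zero h; simp [topAddr]
  | succ d ih =>
    cases t with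
    | zero => simp [topAddr]
    | succ t =>
      cases s with
      | leaf γ => simp [topAddr]
      | node l =>
        simp only [topAddr, List.take_succ_cons]
        rw [ih _ t (by omega)]

/-- A3: `sub?` of an append. -/
lemma sub?_append (s : St Γ) (p q : List ℕ) :
    sub? s (p ++ q) = (sub? s p).bind (fun u => sub? u q) := by
  induction p generalizing s with
  | nil => simp [sub?]
  | cons i p ih =>
    cases s with
    | leaf γ => simp [sub?]
    | node l =>
      simp only [List.cons_append, sub?]
      cases h : l[i]? with
      | none => simp
      | some t => simpa using ih t

/-- A6: `sizeAt` through a cons address. -/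
lemma sizeAt_cons (l : List (St Γ)) (i : ℕ) (t : St Γ) (h : l[i]? = some t) (q : List ℕ) :
    sizeAt (St.node l) (i :: q) = sizeAt t q := by
  simp [sizeAt, sub?, h]

/-- A4: the substack at the top address exists and is valid. -/
lemma topAddr_sub {k : ℕ} {s : St Γ} (hs : IsValid k s) {d : ℕ} (hd : d ≤ k) :
    ∃ u, sub? s (topAddr s d) = some u ∧ IsValid (k - d) u := by
  induction d generalizing s k with
  | zero => exact ⟨s, by simp [topAddr, sub?], by simpa using hs⟩
  | succ d ih =>
    cases s with
    | leaf γ =>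
      cases k with
      | zero => omega
      | succ k => exact absurd hs (by simp [IsValid])
    | node l =>
      cases k with
      | zero => exact absurd hs (by simp [IsValid])
      | succ k =>
        obtain ⟨hne, hall⟩ := hs
        have hmem := getLastD_mem l (St.node []) hne
        obtain ⟨u, hu, hvu⟩ := ih (hall _ hmem) (show d ≤ k by omega)
        refine ⟨u, ?_, by simpa using hvu⟩
        simp only [topAddr, sub?, getElem?_length_sub_one l (St.node []) hne]
        exact hu

/-- A valid stack of positive order is a nonempty node. -/
lemma isValid_pos_node {k : ℕ} {s : St Γ} (hs : IsValid (k + 1) s) :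
    ∃ l, s = St.node l ∧ l ≠ [] ∧ ∀ t ∈ l, IsValid k t := by
  cases s with
  | leaf γ => exact absurd hs (by simp [IsValid])
  | node l => exact ⟨l, rfl, hs.1, hs.2⟩

/-- A5 (V4): the top address one level deeper. -/
lemma topAddr_succ {k : ℕ} {s : St Γ} (hs : IsValid k s) {d : ℕ} (hd : d < k) :
    topAddr s (d + 1) = topAddr s d ++ [sizeAt s (topAddr s d) - 1] := by
  induction d generalizing s k with
  | zero =>
    cases k with
    | zero => omega
    | succ k =>
      obtain ⟨l, rfl, hne, _⟩ := isValid_pos_node hs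
      simp [topAddr, sizeAt, sub?]
  | succ d ih =>
    cases k with
    | zero => omega
    | succ k =>
      obtain ⟨l, rfl, hne, hall⟩ := isValid_pos_node hs
      have hmem := getLastD_mem l (St.node []) hne
      have hrec := ih (hall _ hmem) (show d < k by omega)
      simp only [topAddr, List.cons_append]
      rw [hrec, sizeAt_cons l _ _ (getElem?_length_sub_one l (St.node []) hne)]

/-- A7: coordinate bound for valid addresses. -/
lemma coord_lt_sizeAt {s : St Γ} {w : List ℕ} {c : ℕ} {u : St Γ}
    (h : sub? s (w ++ [c]) = some u) : c < sizeAt s w := by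
  rw [sub?_append] at h
  cases hw : sub? s w with
  | none => rw [hw] at h; simp at h
  | some v =>
    rw [hw] at h
    simp only [Option.bind_some] at h
    cases v with
    | leaf γ => simp [sub?] at h
    | node l =>
      simp only [sub?] at h
      cases hc : l[c]? with
      | none => rw [hc] at h; simp at h
      | some t =>
        obtain ⟨hlt, -⟩ := List.getElem?_eq_some_iff.mp hc
        simpa [sizeAt, hw] using hlt

end Stmt18Aux
section Stmt18Mod

variable {Γ : Type}

/-- B1: `modAt` modifies exactly the substack at the given address. -/
lemma modAt_sub_self {s s' : St Γ} {q : List ℕ} {f : St Γ → Option (St Γ)}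
    (h : modAt s q f = some s') :
    ∃ u u', sub? s q = some u ∧ f u = some u' ∧ sub? s' q = some u' := by
  induction q generalizing s s' with
  | nil =>
    refine ⟨s, s', by simp [sub?], ?_, by simp [sub?]⟩
    cases s <;> simpa [modAt] using h
  | cons i p ih =>
    cases s with
    | leaf γ => simp [modAt] at h
    | node l =>
      cases hi : l[i]? with
      | none => simp [modAt, hi] at h
      | some t =>
        cases hm : modAt t p f with
        | none => simp [modAt, hi, hm] at h
        | some t' =>
          simp only [modAt, hi, hm, Option.some.injEq] at h
          obtain ⟨u, u', h1, h2, h3⟩ := ih hm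
          have hilen : i < l.length := (List.getElem?_eq_some_iff.mp hi).1
          refine ⟨u, u', by simp [sub?, hi, h1], h2, ?_⟩
          rw [← h]
          simp only [sub?, List.getElem?_set_self hilen]
          exact h3

/-- The leaf-replacement function used by `dupTop`. -/
def repl (γ : Γ) : St Γ → Option (St Γ) := fun u =>
  match u with
  | St.leaf _ => some (St.leaf γ)
  | St.node _ => none

/-- The shape of a `dupTop` result. -/
lemma dupTop_shape {r : ℕ} {γ : Γ} {u u' : St Γ} (h : dupTop r γ u = some u') :
    ∃ l t t', u = St.node l ∧ l.getLast? = some t ∧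
      modAt t (topAddr t (r - 1)) (repl γ) = some t' ∧ u' = St.node (l ++ [t']) := by
  cases u with
  | leaf δ => simp [dupTop] at h
  | node l =>
    cases hg : l.getLast? with
    | none => simp [dupTop, hg] at h
    | some t =>
      cases hm : modAt t (topAddr t (r - 1)) (repl γ) with
      | none =>
        simp only [dupTop, hg] at h
        rw [show (fun u => match u with
          | St.leaf _ => some (St.leaf γ) | St.node _ => none) = repl γ from rfl] at h
        rw [hm] at h
        simp at h
      | some t' =>
        refine ⟨l, t, t', rfl, hg, hm, ?_⟩
        simp only [dupTop, hg] at h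
        rw [show (fun u => match u with
          | St.leaf _ => some (St.leaf γ) | St.node _ => none) = repl γ from rfl] at h
        rw [hm] at h
        simpa using h.symm

/-- B3: leaf replacement preserves existence of substacks. -/
lemma repl_ok {γ : Γ} {t t' : St Γ} {q : List ℕ} (h : modAt t q (repl γ) = some t') :
    ∀ p u', sub? t' p = some u' → ∃ u, sub? t p = some u := by
  induction q generalizing t t' with
  | nil =>
    cases t with
    | leaf δ =>
      simp only [modAt, repl] at h
      intro p u' hp
      injection h with h2
      subst h2
      cases p with
      | nil => exact ⟨_, rfl⟩
      | cons j p => simp [sub?] at hp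
    | node l => simp [modAt, repl] at h
  | cons i q ih =>
    cases t with
    | leaf δ => simp [modAt] at h
    | node l =>
      cases hi : l[i]? with
      | none => simp [modAt, hi] at h
      | some w =>
        cases hm : modAt w q (repl γ) with
        | none => simp [modAt, hi, hm] at h
        | some w' =>
          simp only [modAt, hi, hm, Option.some.injEq] at h
          intro p u' hp
          rw [← h] at hp
          cases p with
          | nil => exact ⟨_, rfl⟩
          | cons j p =>
            simp only [sub?] at hp ⊢
            by_cases hij : j = i
            · have hilen : i < l.length := (List.getElem?_eq_some_iff.mp hi).1
              rw [hij, List.getElem?_set_self hilen] at hp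
              obtain ⟨u, hu⟩ := ih hm p u' hp
              simp only [hij, hi]
              exact ⟨u, hu⟩
            · rw [List.getElem?_set_ne (fun hh => hij hh.symm)] at hp
              cases hj : l[j]? with
              | none => rw [hj] at hp; simp at hp
              | some z => rw [hj] at hp; exact ⟨u', hp⟩

/-- B2: existence of substacks is preserved backwards through a `pop`. -/
lemma pop_ok {s s' : St Γ} {q : List ℕ} (h : modAt s q popStk = some s') :
    ∀ p u', sub? s' p = some u' → ∃ u, sub? s p = some u := by
  induction q generalizing s s' with
  | nil =>
    cases s with
    | leaf δ => simp [modAt, popStk] at h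
    | node l =>
      simp only [modAt, popStk] at h
      by_cases hlen : 2 ≤ l.length
      · rw [if_pos hlen] at h
        simp only [Option.some.injEq] at h
        intro p u' hp
        rw [← h] at hp
        cases p with
        | nil => exact ⟨_, rfl⟩
        | cons j p =>
          simp only [sub?] at hp ⊢
          cases hj : l.dropLast[j]? with
          | none => rw [hj] at hp; simp at hp
          | some z =>
            rw [hj] at hp
            rw [List.getElem?_dropLast] at hj
            by_cases hjl : j < l.length - 1
            · rw [if_pos hjl] at hj
              rw [hj]
              exact ⟨u', hp⟩
            · rw [if_neg hjl] at hj; simp at hj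
      · rw [if_neg hlen] at h; simp at h
  | cons i q ih =>
    cases s with
    | leaf δ => simp [modAt] at h
    | node l =>
      cases hi : l[i]? with
      | none => simp [modAt, hi] at h
      | some w =>
        cases hm : modAt w q popStk with
        | none => simp [modAt, hi, hm] at h
        | some w' =>
          simp only [modAt, hi, hm, Option.some.injEq] at h
          intro p u' hp
          rw [← h] at hp
          cases p with
          | nil => exact ⟨_, rfl⟩
          | cons j p =>
            simp only [sub?] at hp ⊢
            by_cases hij : j = i
            · have hilen : i < l.length := (List.getElem?_eq_some_iff.mp hi).1
              rw [hij, List.getElem?_set_self hilen] at hp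
              obtain ⟨u, hu⟩ := ih hm p u' hp
              simp only [hij, hi]
              exact ⟨u, hu⟩
            · rw [List.getElem?_set_ne (fun hh => hij hh.symm)] at hp
              cases hj : l[j]? with
              | none => rw [hj] at hp; simp at hp
              | some z => rw [hj] at hp; exact ⟨u', hp⟩

end Stmt18Mod
section Stmt18Push

variable {Γ : Type}

/-- B5: a `push` at address `q` increases the size there by one. -/
lemma push_size {s s' : St Γ} {q : List ℕ} {r : ℕ} {γ : Γ}
    (h : modAt s q (dupTop r γ) = some s') :
    sizeAt s' q = sizeAt s q + 1 := by
  obtain ⟨u, u', h1, h2, h3⟩ := modAt_sub_self h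
  obtain ⟨l, t, t', rfl, _, _, rfl⟩ := dupTop_shape h2
  simp [sizeAt, h1, h3]

/-- B4: existence of substacks is preserved backwards through a `push`,
along the history map. -/
lemma push_ok {s s' : St Γ} {q : List ℕ} {r : ℕ} {γ : Γ}
    (h : modAt s q (dupTop r γ) = some s') :
    ∀ p u', sub? s' p = some u' →
      ∃ u, sub? s (if p.take (q.length + 1) = q ++ [sizeAt s q]
        then p.set q.length (sizeAt s q - 1) else p) = some u := by
  induction q generalizing s s' with
  | nil =>
    obtain ⟨l, t, t', rfl, hg, hm, rfl⟩ := dupTop_shape (by simpa [modAt] using h)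
    have hsz : sizeAt (St.node l) [] = l.length := by simp [sizeAt, sub?]
    intro p u' hp
    cases p with
    | nil =>
      rw [if_neg (by simp)]
      exact ⟨_, rfl⟩
    | cons j p' =>
      simp only [sub?] at hp
      by_cases hj : j = l.length
      · subst hj
        rw [List.getElem?_concat_length] at hp
        obtain ⟨u, hu⟩ := repl_ok hm p' u' hp
        rw [if_pos (by simp [hsz])]
        have hgl : l[l.length - 1]? = some t := by
          rw [← List.getLast?_eq_getElem?]; exact hg
        simp only [hsz, List.length_nil, List.set]
        simp only [sub?, hgl]
        exact ⟨u, hu⟩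
      · rw [if_neg (by simp [hsz, hj])]
        rw [List.getElem?_append] at hp
        by_cases hjl : j < l.length
        · rw [if_pos hjl] at hp
          cases hz : l[j]? with
          | none => rw [hz] at hp; simp at hp
          | some z =>
            rw [hz] at hp
            simp only [sub?, hz]
            exact ⟨u', hp⟩
        · rw [if_neg hjl] at hp
          have : j - l.length ≥ 1 := by omega
          rw [List.getElem?_eq_none (by simpa using this)] at hp
          simp at hp
  | cons i q ih =>
    cases s with
    | leaf δ => simp [modAt] at h
    | node l =>
      cases hi : l[i]? with
      | none => simp [modAt, hi] at h
      | some t =>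
        cases hm : modAt t q (dupTop r γ) with
        | none => simp [modAt, hi, hm] at h
        | some t' =>
          simp only [modAt, hi, hm, Option.some.injEq] at h
          subst h
          have hsz : sizeAt (St.node l) (i :: q) = sizeAt t q := sizeAt_cons l i t hi q
          intro p u' hp
          cases p with
          | nil =>
            rw [if_neg (by simp)]
            exact ⟨_, rfl⟩
          | cons j p' =>
            simp only [sub?] at hp
            by_cases hij : j = i
            · subst hij
              have hilen : j < l.length := (List.getElem?_eq_some_iff.mp hi).1
              rw [List.getElem?_set_self hilen] at hp
              obtain ⟨u, hu⟩ := ih hm p' u' hp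
              by_cases hcond : p'.take (q.length + 1) = q ++ [sizeAt t q]
              · rw [if_pos (by simp [hsz, List.take_succ_cons, hcond])]
                simp only [List.length_cons, hsz, List.set]
                simp only [sub?, hi]
                rw [if_pos hcond] at hu
                exact ⟨u, hu⟩
              · rw [if_neg (by simp [hsz, List.take_succ_cons, hcond])]
                simp only [sub?, hi]
                rw [if_neg hcond] at hu
                exact ⟨u, hu⟩
            · rw [List.getElem?_set_ne (fun hh => hij hh.symm)] at hp
              rw [if_neg (by simp [List.take_succ_cons, hij])]
              cases hz : l[j]? with
              | none => rw [hz] at hp; simp at hp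
              | some z =>
                rw [hz] at hp
                simp only [sub?, hz]
                exact ⟨u', hp⟩

end Stmt18Push
section Stmt18Run

variable {n : ℕ} {A Γ : Type} {D : DPDA n A Γ}

/-- The stack at time `σ` of an infinite run. -/
def Sj (R : InfRun D) (σ : ℕ) : St Γ := (R.cfg σ).2

/-- Existence of a substack at an address. -/
def OkA (s : St Γ) (p : List ℕ) : Prop := ∃ u, sub? s p = some u

/-- The one-step history map of an infinite run. -/
def istep (R : InfRun D) (σ : ℕ) (p : List ℕ) : List ℕ :=
  match topLeaf? n (Sj R σ) with
  | none => p
  | some γ =>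
      match D.δ (R.cfg σ).1 γ with
      | Trans.read _ => p
      | Trans.op _ o => histStep n o (Sj R σ) p

/-- Case analysis on the step from `σ` to `σ+1`. -/
lemma step_cases (R : InfRun D) (σ : ℕ) :
    IsValid n (Sj R σ) ∧
    ((Sj R (σ + 1) = Sj R σ ∧ ∀ p, istep R σ p = p) ∨
     (∃ k, 1 ≤ k ∧ k ≤ n ∧
        modAt (Sj R σ) (topAddr (Sj R σ) (n - k)) popStk = some (Sj R (σ + 1)) ∧
        ∀ p, istep R σ p = p) ∨
     (∃ k γ, 1 ≤ k ∧ k ≤ n ∧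
        modAt (Sj R σ) (topAddr (Sj R σ) (n - k)) (dupTop k γ) = some (Sj R (σ + 1)) ∧
        ∀ p, istep R σ p =
          (if p.take ((n - k) + 1) =
              topAddr (Sj R σ) (n - k) ++ [sizeAt (Sj R σ) (topAddr (Sj R σ) (n - k))]
           then p.set (n - k) (sizeAt (Sj R σ) (topAddr (Sj R σ) (n - k)) - 1)
           else p))) := by
  have h := R.ok σ
  have hS1 : Sj R σ = (R.cfg σ).2 := rfl
  have hS2 : Sj R (σ + 1) = (R.cfg (σ + 1)).2 := rfl
  rcases hcfg : R.cfg σ with ⟨q0, s0⟩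
  rcases hcfg' : R.cfg (σ + 1) with ⟨q1, s1⟩
  rw [hcfg] at h hS1
  rw [hcfg'] at h hS2
  have histep : ∀ p, istep R σ p =
      match topLeaf? n s0 with
      | none => p
      | some γ =>
          match D.δ q0 γ with
          | Trans.read _ => p
          | Trans.op _ o => histStep n o s0 p := by
    intro p
    unfold istep Sj
    rw [hcfg]
  simp only [hS1, hS2]
  generalize R.lab σ = lb at h
  cases h with
  | read a hv htl hδ =>
    refine ⟨hv, Or.inl ⟨rfl, fun p => ?_⟩⟩
    simp [histep, htl, hδ]
  | @op _ _ _ γw q'w ow hv htl hδ happ =>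
    refine ⟨hv, ?_⟩
    cases ow with
    | pop k =>
      simp only [applyOp] at happ
      by_cases hk : 1 ≤ k ∧ k ≤ n
      · rw [if_pos hk] at happ
        refine Or.inr (Or.inl ⟨k, hk.1, hk.2, happ, fun p => ?_⟩)
        simp [histep, htl, hδ, histStep]
      · rw [if_neg hk] at happ; simp at happ
    | push k γ' =>
      simp only [applyOp] at happ
      by_cases hk : 1 ≤ k ∧ k ≤ n
      · rw [if_pos hk] at happ
        refine Or.inr (Or.inr ⟨k, γ', hk.1, hk.2, happ, fun p => ?_⟩)
        simp [histep, htl, hδ, histStep]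
      · rw [if_neg hk] at happ; simp at happ

/-- C1: the history map preserves lengths. -/
lemma istep_length (R : InfRun D) (σ : ℕ) (p : List ℕ) :
    (istep R σ p).length = p.length := by
  rcases (step_cases R σ).2 with ⟨_, hid⟩ | ⟨k, _, _, _, hid⟩ | ⟨k, γ, _, _, _, hid⟩
  · rw [hid]
  · rw [hid]
  · rw [hid]
    split
    · simp
    · rfl

/-- C2: the history map preserves existence of substacks. -/
lemma istep_ok (R : InfRun D) (σ : ℕ) (p : List ℕ) (h : OkA (Sj R (σ + 1)) p) :
    OkA (Sj R σ) (istep R σ p) := by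
  obtain ⟨u', hu'⟩ := h
  obtain ⟨hv, hc⟩ := step_cases R σ
  rcases hc with ⟨heq, hid⟩ | ⟨k, hk1, hk2, hmod, hid⟩ | ⟨k, γ, hk1, hk2, hmod, hid⟩
  · rw [hid]
    exact ⟨u', heq ▸ hu'⟩
  · rw [hid]
    exact pop_ok hmod p u' hu'
  · rw [hid]
    have hlen : (topAddr (Sj R σ) (n - k)).length = n - k :=
      topAddr_length hv (by omega)
    have := push_ok hmod p u' hu'
    rwa [hlen] at this

/-- C3: the history map commutes with `take`. -/
lemma istep_take (R : InfRun D) (σ : ℕ) (p : List ℕ) (t : ℕ) :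
    istep R σ (p.take t) = (istep R σ p).take t := by
  obtain ⟨hv, hc⟩ := step_cases R σ
  rcases hc with ⟨heq, hid⟩ | ⟨k, hk1, hk2, hmod, hid⟩ | ⟨k, γ, hk1, hk2, hmod, hid⟩
  · rw [hid, hid]
  · rw [hid, hid]
  · rw [hid, hid]
    set m := n - k with hm
    set ta := topAddr (Sj R σ) m with hta
    set sz := sizeAt (Sj R σ) ta with hsz
    have hlen : ta.length = m := topAddr_length hv (by omega)
    by_cases hcond : p.take (m + 1) = ta ++ [sz]
    · rw [if_pos hcond]
      by_cases htm : m + 1 ≤ t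
      · rw [if_pos (by rw [List.take_take]; rw [Nat.min_eq_left htm]; exact hcond)]
        exact (List.take_set).symm
      · have hnc : ¬ List.take (m + 1) (List.take t p) = ta ++ [sz] := by
          intro hcc
          have := congrArg List.length hcc
          simp [hlen] at this
          have h2 : (List.take (m+1) (p.take t)).length ≤ t := by
            rw [List.take_take]
            calc (p.take (min (m+1) t)).length ≤ min (m+1) t := List.length_take_le _ p
              _ ≤ t := Nat.min_le_right _ _
          omega
        rw [if_neg hnc, List.take_set]
        have hlt : (p.take t).length ≤ m := by
          have h2 : t ≤ m := by omega
          calc (p.take t).length ≤ t := List.length_take_le t p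
            _ ≤ m := h2
        rw [List.set_eq_of_length_le hlt]
    · rw [if_neg hcond]
      by_cases htm : m + 1 ≤ t
      · rw [if_neg (by rw [List.take_take, Nat.min_eq_left htm]; exact hcond)]
      · have hnc : ¬ List.take (m + 1) (List.take t p) = ta ++ [sz] := by
          intro hcc
          have := congrArg List.length hcc
          have h2 : (List.take (m+1) (p.take t)).length ≤ t := by
            rw [List.take_take]
            calc (p.take (min (m+1) t)).length ≤ min (m+1) t := List.length_take_le _ p
              _ ≤ t := Nat.min_le_right _ _
          simp [hlen] at this
          omega
        rw [if_neg hnc]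

/-- C4: behaviour of the history map on the last coordinate of an
`(ℓ+1)`-long address. -/
lemma istep_last (R : InfRun D) (σ ℓ : ℕ) (hℓ : ℓ < n) (w : List ℕ) (c : ℕ)
    (hw : w.length = ℓ) :
    ∃ c', istep R σ (w ++ [c]) = istep R σ w ++ [c'] ∧
      (c' = c ∨
        (c' + 1 = c ∧ w = topAddr (Sj R σ) ℓ ∧ c = sizeAt (Sj R σ) w ∧
         istep R σ (w ++ [c]) = topAddr (Sj R σ) (ℓ + 1) ∧
         sizeAt (Sj R (σ + 1)) w = c + 1)) := by
  obtain ⟨hv, hc⟩ := step_cases R σ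
  rcases hc with ⟨heq, hid⟩ | ⟨k, hk1, hk2, hmod, hid⟩ | ⟨k, γ, hk1, hk2, hmod, hid⟩
  · exact ⟨c, by rw [hid, hid], Or.inl rfl⟩
  · exact ⟨c, by rw [hid, hid], Or.inl rfl⟩
  · set m := n - k with hm
    set ta := topAddr (Sj R σ) m with hta
    set sz := sizeAt (Sj R σ) ta with hsz
    have hlenta : ta.length = m := topAddr_length hv (by omega)
    rcases Nat.lt_trichotomy m ℓ with hmℓ | hmℓ | hmℓ
    · -- m < ℓ : the modification happens inside the prefix
      have htk : (w ++ [c]).take (m + 1) = w.take (m + 1) :=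
        List.take_append_of_le_length (by omega)
      by_cases hcond : w.take (m + 1) = ta ++ [sz]
      · refine ⟨c, ?_, Or.inl rfl⟩
        rw [hid, hid, if_pos (by rw [htk]; exact hcond), if_pos hcond]
        rw [List.set_append, if_pos (by omega)]
      · refine ⟨c, ?_, Or.inl rfl⟩
        rw [hid, hid, if_neg (by rw [htk]; exact hcond), if_neg hcond]
    · -- m = ℓ : the interesting case
      subst hmℓ
      have hwc : (w ++ [c]).take (m + 1) = w ++ [c] :=
        List.take_of_length_le (by simp [hw])
      have hwm : w.take (m + 1) = w := List.take_of_length_le (by omega)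
      have hwno : ¬ (w = ta ++ [sz]) := by
        intro hh
        have := congrArg List.length hh
        simp [hw, hlenta] at this
      by_cases hcond : w = ta ∧ c = sz
      · obtain ⟨hwta, hcsz⟩ := hcond
        have hfire : (w ++ [c]).take (m + 1) = ta ++ [sz] := by
          rw [hwc, hwta, hcsz]
        refine ⟨sz - 1, ?_, Or.inr ⟨?_, ?_, ?_, ?_, ?_⟩⟩
        · rw [hid, hid, if_pos hfire, if_neg (by rw [hwm]; exact hwno)]
          rw [← hw, List.set_append, if_neg (by omega)]
          simp
        · -- sz ≥ 1
          obtain ⟨u, hu, hvu⟩ := topAddr_sub hv (show m ≤ n by omega)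
          have hpos : 0 < n - m := by omega
          obtain ⟨l, rfl, hne, _⟩ := isValid_pos_node (k := n - m - 1)
            (by rwa [show n - m - 1 + 1 = n - m by omega])
          have : sz = l.length := by rw [hsz, sizeAt, hta, hu]
          have : 1 ≤ sz := by
            rw [this]
            exact List.length_pos_iff.mpr hne
          omega
        · exact hwta
        · rw [hwta]; exact hcsz
        · rw [hid, if_pos hfire]
          have hset : (w ++ [c]).set m (sz - 1) = w ++ [sz - 1] := by
            rw [← hw, List.set_append, if_neg (by omega)]
            simp [Nat.sub_self]
          rw [hset, topAddr_succ hv hℓ, hwta]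
        · rw [hwta, push_size hmod, ← hsz, hcsz]
      · refine ⟨c, ?_, Or.inl rfl⟩
        have hnofire : ¬ ((w ++ [c]).take (m + 1) = ta ++ [sz]) := by
          rw [hwc]
          intro hh
          obtain ⟨h1, h2⟩ := List.append_inj hh (by rw [hw, hlenta])
          exact hcond ⟨h1, by simpa using h2⟩
        rw [hid, hid, if_neg hnofire, if_neg (by rw [hwm]; exact hwno)]
    · -- ℓ < m : the address is too short to be affected
      have hlen1 : ((w ++ [c]).take (m + 1)).length ≤ ℓ + 1 := by
        have h1 := List.length_take (i := m + 1) (l := w ++ [c])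
        have h2 : (w ++ [c]).length = ℓ + 1 := by simp [hw]
        omega
      have hno1 : ¬ ((w ++ [c]).take (m + 1) = ta ++ [sz]) := by
        intro hh
        have h3 := congrArg List.length hh
        have h4 : (ta ++ [sz]).length = m + 1 := by simp [hlenta]
        omega
      have hno2 : ¬ (w.take (m + 1) = ta ++ [sz]) := by
        intro hh
        have h3 := congrArg List.length hh
        have h4 : (ta ++ [sz]).length = m + 1 := by simp [hlenta]
        have h5 := List.length_take (i := m + 1) (l := w)
        have h6 : w.length = ℓ := hw
        omega
      exact ⟨c, by rw [hid, hid, if_neg hno1, if_neg hno2], Or.inl rfl⟩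

end Stmt18Run
section Stmt18Tr

variable {n : ℕ} {A Γ : Type} {D : DPDA n A Γ}

/-- The history map from time `j` back to time `i` of an infinite run. -/
def tr (R : InfRun D) (i : ℕ) : ℕ → List ℕ → List ℕ
  | 0, p => p
  | j + 1, p => if j + 1 ≤ i then p else tr R i j (istep R j p)

lemma tr_of_le (R : InfRun D) {i j : ℕ} (h : j ≤ i) (p : List ℕ) : tr R i j p = p := by
  induction j with
  | zero => rfl
  | succ j ih => rw [tr, if_pos h]

lemma tr_self (R : InfRun D) (i : ℕ) (p : List ℕ) : tr R i i p = p :=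
  tr_of_le R le_rfl p

lemma tr_comp (R : InfRun D) {i m j : ℕ} (him : i ≤ m) (hmj : m ≤ j) (p : List ℕ) :
    tr R i j p = tr R i m (tr R m j p) := by
  induction j generalizing p with
  | zero =>
    have : m = 0 := by omega
    subst this
    rfl
  | succ j ih =>
    by_cases hm : m = j + 1
    · subst hm
      rw [tr_self]
    · have hmj' : m ≤ j := by omega
      rw [tr, if_neg (by omega), tr, if_neg (by omega), ih hmj']

lemma tr_ok (R : InfRun D) {i j : ℕ} (hij : i ≤ j) (p : List ℕ)
    (h : OkA (Sj R j) p) : OkA (Sj R i) (tr R i j p) := by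
  induction j generalizing p with
  | zero =>
    have : i = 0 := by omega
    subst this
    exact h
  | succ j ih =>
    rw [tr]
    by_cases hi : j + 1 ≤ i
    · rw [if_pos hi]
      have : i = j + 1 := by omega
      subst this
      exact h
    · rw [if_neg hi]
      exact ih (by omega) _ (istep_ok R j p h)

lemma tr_length (R : InfRun D) (i j : ℕ) (p : List ℕ) :
    (tr R i j p).length = p.length := by
  induction j generalizing p with
  | zero => rfl
  | succ j ih =>
    rw [tr]
    split
    · rfl
    · rw [ih, istep_length]

lemma tr_take (R : InfRun D) (i j : ℕ) (p : List ℕ) (t : ℕ) :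
    tr R i j (p.take t) = (tr R i j p).take t := by
  induction j generalizing p with
  | zero => rfl
  | succ j ih =>
    rw [tr, tr]
    split
    · rfl
    · rw [istep_take, ih]

/-- D6: the last coordinate does not increase along the history map. -/
lemma tr_last (R : InfRun D) (i j ℓ : ℕ) (hℓ : ℓ < n) (w : List ℕ) (c : ℕ)
    (hw : w.length = ℓ) :
    ∃ c', tr R i j (w ++ [c]) = tr R i j w ++ [c'] ∧ c' ≤ c := by
  induction j generalizing w c with
  | zero => exact ⟨c, rfl, le_rfl⟩
  | succ j ih =>
    rw [tr, tr]
    by_cases hi : j + 1 ≤ i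
    · rw [if_pos hi, if_pos hi]
      exact ⟨c, rfl, le_rfl⟩
    · rw [if_neg hi, if_neg hi]
      obtain ⟨c₁, hc₁, hdc⟩ := istep_last R j ℓ hℓ w c hw
      rw [hc₁]
      obtain ⟨c', hc', hcc⟩ := ih (istep R j w) c₁ (by rw [istep_length, hw])
      refine ⟨c', hc', ?_⟩
      rcases hdc with rfl | ⟨h1, _⟩ <;> omega

/-- Monotonicity of the history map in the last coordinate. -/
lemma tr_mono (R : InfRun D) (i j ℓ : ℕ) (hℓ : ℓ < n) (w : List ℕ) (c d : ℕ)
    (hw : w.length = ℓ) (hcd : c ≤ d) :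
    ∃ c' d', tr R i j (w ++ [c]) = tr R i j w ++ [c'] ∧
      tr R i j (w ++ [d]) = tr R i j w ++ [d'] ∧ c' ≤ d' := by
  induction j generalizing w c d with
  | zero => exact ⟨c, d, rfl, rfl, hcd⟩
  | succ j ih =>
    rw [tr, tr, tr]
    by_cases hi : j + 1 ≤ i
    · rw [if_pos hi, if_pos hi, if_pos hi]
      exact ⟨c, d, rfl, rfl, hcd⟩
    · rw [if_neg hi, if_neg hi, if_neg hi]
      obtain ⟨c₁, hc₁, hdc⟩ := istep_last R j ℓ hℓ w c hw
      obtain ⟨d₁, hd₁, hdd⟩ := istep_last R j ℓ hℓ w d hw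
      have hcd₁ : c₁ ≤ d₁ := by
        rcases Nat.eq_or_lt_of_le hcd with rfl | hlt
        · rw [hc₁] at hd₁
          have := List.append_inj hd₁ rfl
          simp at this
          omega
        · rcases hdc with rfl | ⟨h1c, h2c, h3c, _⟩ <;>
            rcases hdd with rfl | ⟨h1d, h2d, h3d, _⟩ <;> omega
      rw [hc₁, hd₁]
      obtain ⟨c', d', hc', hd', hfin⟩ := ih (istep R j w) c₁ d₁
        (by rw [istep_length, hw]) hcd₁
      exact ⟨c', d', hc', hd', hfin⟩

end Stmt18Tr
section Stmt18Bridge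

variable {n : ℕ} {A Γ : Type} {D : DPDA n A Γ}

lemma stepHist_eq (R : InfRun D) (i j t : ℕ) (p : List ℕ) :
    Run.stepHist (R.sub i j) t p = istep R (i + t) p := by
  unfold Run.stepHist istep Sj
  show (match topLeaf? n (R.cfg (i + t)).2 with
    | none => id
    | some γ =>
      match D.δ (R.cfg (i + t)).1 γ with
      | Trans.read _ => id
      | Trans.op _ o => histStep n o (R.cfg (i + t)).2) p =
    match topLeaf? n (R.cfg (i + t)).2 with
    | none => p
    | some γ =>
      match D.δ (R.cfg (i + t)).1 γ with
      | Trans.read _ => p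
      | Trans.op _ o => histStep n o (R.cfg (i + t)).2 p
  cases htl : topLeaf? n (R.cfg (i + t)).2 with
  | none => simp
  | some γ =>
    cases hδ : D.δ (R.cfg (i + t)).1 γ with
    | read f => simp [hδ]
    | op q o => simp [hδ]

lemma histTo_eq (R : InfRun D) (i j : ℕ) (t : ℕ) (p : List ℕ) :
    Run.histTo (R.sub i j) 0 t p = tr R i (i + t) p := by
  induction t generalizing p with
  | zero => rw [tr_of_le R (by omega)]; rfl
  | succ t ih =>
    show (if t + 1 ≤ 0 then p else Run.histTo (R.sub i j) 0 t (Run.stepHist (R.sub i j) t p)) =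
      tr R i (i + t + 1) p
    rw [if_neg (by omega), stepHist_eq, ih]
    rw [tr, if_neg (by omega)]

lemma isUpper_iff (R : InfRun D) (a b : ℕ) (hab : a ≤ b) (k : ℕ) :
    (R.sub a b).IsUpper k ↔
      tr R a b (topAddr (Sj R b) (n - k)) = topAddr (Sj R a) (n - k) := by
  unfold Run.IsUpper
  have hlen : (R.sub a b).len = b - a := rfl
  have hab' : a + (b - a) = b := by omega
  have hcfg : (R.sub a b).cfg (b - a) = R.cfg b := by
    show R.cfg (a + (b - a)) = R.cfg b
    rw [hab']
  rw [hlen, hcfg, histTo_eq, hab']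
  rfl

/-- The shift of an infinite run. -/
def shiftRun (R : InfRun D) (β : ℕ) : InfRun D :=
  ⟨fun s => R.cfg (β + s), fun s => R.lab (β + s), fun s => R.ok (β + s)⟩

lemma istep_shift (R : InfRun D) (β σ : ℕ) (p : List ℕ) :
    istep (shiftRun R β) σ p = istep R (β + σ) p := rfl

lemma Sj_shift (R : InfRun D) (β σ : ℕ) : Sj (shiftRun R β) σ = Sj R (β + σ) := rfl

lemma tr_shift (R : InfRun D) (β i j : ℕ) (p : List ℕ) :
    tr (shiftRun R β) i j p = tr R (β + i) (β + j) p := by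
  induction j generalizing p with
  | zero => rw [tr_of_le R (by omega)]; rfl
  | succ j ih =>
    rw [tr, show β + (j + 1) = (β + j) + 1 from rfl, tr]
    by_cases hj : j + 1 ≤ i
    · rw [if_pos hj, if_pos (by omega)]
    · rw [if_neg hj, if_neg (by omega), istep_shift, ih]

/-- Each point of an infinite pairwise `0`-upper family is a milestone. -/
lemma milestone_of_upper (R : InfRun D) (star : A) (hw : ∀ i, OnlyStar star (R.lab i))
    (g : ℕ → ℕ) (hg : StrictMono g)
    (hup : ∀ t u, t < u →
      tr R (g t) (g u) (topAddr (Sj R (g u)) n) = topAddr (Sj R (g t)) n)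
    (t₀ : ℕ) : Milestone star (R.cfg (g t₀)) := by
  refine ⟨shiftRun R (g t₀), rfl, fun i => hw _,
    (fun u => g u - g t₀) '' Set.Ici t₀, ?_,
    ⟨t₀, Set.mem_Ici.mpr le_rfl, by simp⟩, ?_⟩
  · apply Set.infinite_of_injective_forall_mem
      (f := fun s : ℕ => g (t₀ + s) - g t₀)
    · intro s s' hss
      simp only at hss
      have h1 : g t₀ ≤ g (t₀ + s) := hg.monotone (by omega)
      have h2 : g t₀ ≤ g (t₀ + s') := hg.monotone (by omega)
      by_contra hne
      rcases Nat.lt_or_ge s s' with hlt | hge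
      · have := hg (show t₀ + s < t₀ + s' by omega)
        omega
      · have hlt : s' < s := by omega
        have := hg (show t₀ + s' < t₀ + s by omega)
        omega
    · intro s
      exact ⟨t₀ + s, by simp, rfl⟩
  · rintro i ⟨a, ha, rfl⟩ j ⟨b, hb, rfl⟩ hij
    have hij' : g a - g t₀ ≤ g b - g t₀ := hij
    have hga : g t₀ ≤ g a := hg.monotone ha
    have hgb : g t₀ ≤ g b := hg.monotone hb
    have hab : a ≤ b := by
      by_contra hcon
      have := hg (show b < a by omega)
      omega
    show ((shiftRun R (g t₀)).sub (g a - g t₀) (g b - g t₀)).IsUpper 0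
    rw [isUpper_iff (shiftRun R (g t₀)) _ _ hij']
    rw [tr_shift, Sj_shift, Sj_shift]
    rw [show g t₀ + (g a - g t₀) = g a by omega, show g t₀ + (g b - g t₀) = g b by omega]
    rcases Nat.eq_or_lt_of_le hab with rfl | hlt
    · rw [tr_self]
    · simpa using hup a b hlt

end Stmt18Bridge
section Stmt18Base

variable {n : ℕ} {A Γ : Type} {D : DPDA n A Γ}

/-- Pairwise `ℓ`-upper family. -/
def PairUp (R : InfRun D) (g : ℕ → ℕ) (ℓ : ℕ) : Prop :=
  ∀ t u, t < u → tr R (g t) (g u) (topAddr (Sj R (g u)) ℓ) = topAddr (Sj R (g t)) ℓ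

lemma topAddr_zero (s : St Γ) : topAddr s 0 = [] := by cases s <;> rfl

lemma istep_nil (R : InfRun D) (σ : ℕ) : istep R σ ([] : List ℕ) = [] := by
  rcases (step_cases R σ).2 with ⟨_, hid⟩ | ⟨k, _, _, _, hid⟩ | ⟨k, γ, _, _, _, hid⟩
  · rw [hid]
  · rw [hid]
  · rw [hid]
    rw [if_neg (by simp)]

lemma tr_nil (R : InfRun D) (i j : ℕ) : tr R i j ([] : List ℕ) = [] := by
  induction j with
  | zero => rfl
  | succ j ih =>
    rw [tr]
    split
    · rfl
    · rw [istep_nil, ih]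

/-- The base case: every family is pairwise `0`-upper. -/
lemma pairup_zero (R : InfRun D) : PairUp R id 0 := by
  intro t u _
  show tr R t u (topAddr (Sj R u) 0) = topAddr (Sj R t) 0
  rw [topAddr_zero, topAddr_zero, tr_nil]

/-- Choice of a strictly monotone enumeration inside an infinite set of naturals. -/
lemma exists_strictMono_mem {S : Set ℕ} (hS : S.Infinite) :
    ∃ f : ℕ → ℕ, StrictMono f ∧ ∀ s, f s ∈ S := by
  let f : ℕ → ℕ := fun s => Nat.rec (Classical.choose (hS.exists_gt 0))
    (fun _ prev => Classical.choose (hS.exists_gt prev)) s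
  have hf0 : f 0 ∈ S := (Classical.choose_spec (hS.exists_gt 0)).1
  have hfs : ∀ s, f (s + 1) ∈ S ∧ f s < f (s + 1) := by
    intro s
    exact ⟨(Classical.choose_spec (hS.exists_gt (f s))).1,
      (Classical.choose_spec (hS.exists_gt (f s))).2⟩
  refine ⟨f, strictMono_nat_of_lt_succ (fun s => (hfs s).2), fun s => ?_⟩
  cases s with
  | zero => exact hf0
  | succ s => exact (hfs s).1

end Stmt18Base
section Stmt18V

variable {n : ℕ} {A Γ : Type} {D : DPDA n A Γ}

/-- The topmost `ℓ`-prefix address at time `σ`. -/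
def wpre (R : InfRun D) (ℓ σ : ℕ) : List ℕ := topAddr (Sj R σ) ℓ

/-- The topmost coordinate at level `ℓ` at time `σ`. -/
def Tc (R : InfRun D) (ℓ σ : ℕ) : ℕ := sizeAt (Sj R σ) (wpre R ℓ σ) - 1

/-- The prefix of the trace of the top `(ℓ+1)`-prefix of time `b`, at time `σ`. -/
def pregen (R : InfRun D) (ℓ b σ : ℕ) : List ℕ := tr R σ b (wpre R ℓ b)

/-- The coordinate of the trace of `wpre b ++ [c]` at time `σ`. -/
def vgen (R : InfRun D) (ℓ b σ c : ℕ) : ℕ :=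
  (tr R σ b (wpre R ℓ b ++ [c])).getLastD 0

lemma wpre_length (R : InfRun D) {ℓ : ℕ} (hℓ : ℓ ≤ n) (σ : ℕ) :
    (wpre R ℓ σ).length = ℓ :=
  topAddr_length (step_cases R σ).1 hℓ

lemma toprep (R : InfRun D) {ℓ : ℕ} (hℓ : ℓ < n) (σ : ℕ) :
    topAddr (Sj R σ) (ℓ + 1) = wpre R ℓ σ ++ [Tc R ℓ σ] :=
  topAddr_succ (step_cases R σ).1 hℓ

/-- L3: decomposition of the trace of `wpre b ++ [c]`. -/
lemma vgen_decomp (R : InfRun D) {ℓ : ℕ} (hℓ : ℓ < n) (b σ c : ℕ) :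
    tr R σ b (wpre R ℓ b ++ [c]) = pregen R ℓ b σ ++ [vgen R ℓ b σ c] := by
  obtain ⟨c', hc', _⟩ := tr_last R σ b ℓ hℓ (wpre R ℓ b) c (wpre_length R (by omega) b)
  rw [vgen, hc', List.getLastD_concat]
  rfl

lemma vgen_self (R : InfRun D) {ℓ : ℕ} (b c : ℕ) : vgen R ℓ b b c = c := by
  rw [vgen, tr_self, List.getLastD_concat]

lemma pregen_self (R : InfRun D) (ℓ b : ℕ) : pregen R ℓ b b = wpre R ℓ b := tr_self R b _

/-- L4: monotonicity of the trace coordinate in the starting coordinate. -/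
lemma vgen_mono (R : InfRun D) {ℓ : ℕ} (hℓ : ℓ < n) (b σ : ℕ) {c d : ℕ} (hcd : c ≤ d) :
    vgen R ℓ b σ c ≤ vgen R ℓ b σ d := by
  obtain ⟨c', d', hc', hd', h⟩ := tr_mono R σ b ℓ hℓ (wpre R ℓ b) c d
    (wpre_length R (by omega) b) hcd
  have h1 : vgen R ℓ b σ c = c' := by rw [vgen, hc', List.getLastD_concat]
  have h2 : vgen R ℓ b σ d = d' := by rw [vgen, hd', List.getLastD_concat]
  omega

/-- Peeling one step off a trace. -/
lemma tr_peel (R : InfRun D) {σ b : ℕ} (h : σ < b) (p : List ℕ) :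
    tr R σ b p = istep R σ (tr R (σ + 1) b p) := by
  rw [tr_comp R (show σ ≤ σ + 1 by omega) (show σ + 1 ≤ b by omega)]
  generalize tr R (σ + 1) b p = q
  show tr R σ (σ + 1) q = istep R σ q
  rw [tr, if_neg (by omega), tr_self]

lemma pregen_peel (R : InfRun D) {ℓ σ b : ℕ} (h : σ < b) :
    pregen R ℓ b σ = istep R σ (pregen R ℓ b (σ + 1)) := tr_peel R h _

/-- L7: the trace coordinate is monotone in time. -/
lemma vgen_time_mono (R : InfRun D) {ℓ : ℕ} (hℓ : ℓ < n) {b σ σ' : ℕ}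
    (h1 : σ ≤ σ') (h2 : σ' ≤ b) (c : ℕ) :
    vgen R ℓ b σ c ≤ vgen R ℓ b σ' c := by
  have hco : tr R σ b (wpre R ℓ b ++ [c]) =
      tr R σ σ' (pregen R ℓ b σ' ++ [vgen R ℓ b σ' c]) := by
    rw [tr_comp R h1 h2, vgen_decomp R hℓ]
  obtain ⟨c', hc', hle⟩ := tr_last R σ σ' ℓ hℓ (pregen R ℓ b σ') (vgen R ℓ b σ' c)
    (by rw [pregen, tr_length]; exact wpre_length R (by omega) b)
  have : vgen R ℓ b σ c = c' := by
    rw [vgen, hco, hc', List.getLastD_concat]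
  omega

/-- Composition of traces through an intermediate time. -/
lemma vgen_comp (R : InfRun D) {ℓ : ℕ} (hℓ : ℓ < n) {b m σ : ℕ}
    (h1 : σ ≤ m) (h2 : m ≤ b) (c : ℕ)
    (hpm : pregen R ℓ b m = wpre R ℓ m) :
    vgen R ℓ b σ c = vgen R ℓ m σ (vgen R ℓ b m c) := by
  rw [vgen, tr_comp R h1 h2, vgen_decomp R hℓ, hpm]
  rw [vgen_decomp R hℓ m σ, List.getLastD_concat]

/-- L6: single-step dichotomy for the trace coordinate. -/
lemma vgen_step (R : InfRun D) {ℓ : ℕ} (hℓ : ℓ < n) {σ b : ℕ} (h : σ < b) (c : ℕ) :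
    vgen R ℓ b σ c = vgen R ℓ b (σ + 1) c ∨
    (vgen R ℓ b σ c + 1 = vgen R ℓ b (σ + 1) c ∧
     pregen R ℓ b (σ + 1) = topAddr (Sj R σ) ℓ ∧
     vgen R ℓ b (σ + 1) c = sizeAt (Sj R σ) (pregen R ℓ b (σ + 1)) ∧
     tr R σ b (wpre R ℓ b ++ [c]) = topAddr (Sj R σ) (ℓ + 1) ∧
     sizeAt (Sj R (σ + 1)) (pregen R ℓ b (σ + 1)) = vgen R ℓ b (σ + 1) c + 1) := by
  have hplen : (pregen R ℓ b (σ + 1)).length = ℓ := by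
    rw [pregen, tr_length]; exact wpre_length R (by omega) b
  obtain ⟨c₁, hc₁, hdi⟩ := istep_last R σ ℓ hℓ (pregen R ℓ b (σ + 1))
    (vgen R ℓ b (σ + 1) c) hplen
  have htr : tr R σ b (wpre R ℓ b ++ [c]) = pregen R ℓ b σ ++ [c₁] := by
    rw [tr_peel R h, vgen_decomp R hℓ, hc₁, pregen_peel R h]
  have hv : vgen R ℓ b σ c = c₁ := by
    rw [vgen, htr, List.getLastD_concat]
  rcases hdi with heq | ⟨h1, h2, h3, h4, h5⟩
  · left; omega
  · right
    refine ⟨by omega, h2, h3, ?_, by omega⟩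
    rw [tr_peel R h, vgen_decomp R hℓ, h4]

/-- L8: validity of the traced address. -/
lemma vgen_ok (R : InfRun D) {ℓ : ℕ} (hℓ : ℓ < n) {σ b : ℕ} (h : σ ≤ b) :
    OkA (Sj R σ) (pregen R ℓ b σ ++ [vgen R ℓ b σ (Tc R ℓ b)]) := by
  rw [← vgen_decomp R hℓ]
  apply tr_ok R h
  obtain ⟨u, hu, _⟩ := topAddr_sub (step_cases R b).1 (show ℓ + 1 ≤ n by omega)
  rw [toprep R hℓ] at hu
  exact ⟨u, hu⟩

/-- The traced coordinate of the top is bounded by the current top coordinate. -/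
lemma vgen_le_Tc (R : InfRun D) {ℓ : ℕ} (hℓ : ℓ < n) {σ b : ℕ} (h : σ ≤ b)
    (hpre : pregen R ℓ b σ = wpre R ℓ σ) :
    vgen R ℓ b σ (Tc R ℓ b) ≤ Tc R ℓ σ := by
  obtain ⟨u, hu⟩ := vgen_ok R hℓ h
  rw [hpre] at hu
  have := coord_lt_sizeAt hu
  have hT : Tc R ℓ σ = sizeAt (Sj R σ) (wpre R ℓ σ) - 1 := rfl
  omega

end Stmt18V
section Stmt18Core

variable {n : ℕ} {A Γ : Type} {D : DPDA n A Γ}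

/-- Core induction step, assuming the traces between family members are stabilized. -/
lemma pairup_succ_core (R : InfRun D) (ℓ : ℕ) (hℓ : ℓ < n) (g : ℕ → ℕ)
    (hg : StrictMono g) (hup : PairUp R g ℓ)
    (hstab : ∀ t u u', t < u → u < u' →
      vgen R ℓ (g u) (g t) (Tc R ℓ (g u)) = vgen R ℓ (g u') (g t) (Tc R ℓ (g u'))) :
    ∃ g', StrictMono g' ∧ PairUp R g' (ℓ + 1) := by
  classical
  set E : ℕ → ℕ := fun t => vgen R ℓ (g (t + 1)) (g t) (Tc R ℓ (g (t + 1))) with hEdef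
  have hpre : ∀ t u, t ≤ u → pregen R ℓ (g u) (g t) = wpre R ℓ (g t) := by
    intro t u htu
    rcases Nat.eq_or_lt_of_le htu with rfl | hlt
    · exact pregen_self R ℓ (g t)
    · exact hup t u hlt
  have hEe : ∀ t u, t < u → vgen R ℓ (g u) (g t) (Tc R ℓ (g u)) = E t := by
    intro t u htu
    rcases Nat.lt_trichotomy u (t + 1) with h | h | h
    · omega
    · rw [h]
    · exact (hstab t (t + 1) u (by omega) h).symm
  have hbound : ∀ t u, t ≤ u → vgen R ℓ (g u) (g t) (Tc R ℓ (g u)) ≤ Tc R ℓ (g t) :=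
    fun t u htu => vgen_le_Tc R hℓ (hg.monotone htu) (hpre t u htu)
  have hEbound : ∀ t, E t ≤ Tc R ℓ (g t) := fun t => hbound t (t + 1) (by omega)
  have hEmono : ∀ t u, t ≤ u → E t ≤ E u := by
    intro t u htu
    rcases Nat.eq_or_lt_of_le htu with rfl | hlt
    · exact le_rfl
    · have h1 : E t = vgen R ℓ (g (u + 1)) (g t) (Tc R ℓ (g (u + 1))) :=
        (hEe t (u + 1) (by omega)).symm
      have h2 : E u = vgen R ℓ (g (u + 1)) (g u) (Tc R ℓ (g (u + 1))) := rfl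
      rw [h1, h2]
      exact vgen_time_mono R hℓ (hg.monotone (le_of_lt hlt))
        (hg.monotone (by omega)) _
  have hupper : ∀ t u, t < u → vgen R ℓ (g u) (g t) (Tc R ℓ (g u)) = Tc R ℓ (g t) →
      tr R (g t) (g u) (topAddr (Sj R (g u)) (ℓ + 1)) = topAddr (Sj R (g t)) (ℓ + 1) := by
    intro t u htu het
    rw [toprep R hℓ, toprep R hℓ, vgen_decomp R hℓ, hpre t u (le_of_lt htu), het]
  by_cases hinf : {t | E t = Tc R ℓ (g t)}.Infinite
  · obtain ⟨f, hf, hfmem⟩ := exists_strictMono_mem hinf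
    refine ⟨g ∘ f, hg.comp hf, fun t u htu => ?_⟩
    exact hupper (f t) (f u) (hf htu)
      (by rw [hEe (f t) (f u) (hf htu)]; exact hfmem t)
  · -- Case B : eventually the trace drops strictly below the top
    obtain ⟨N, hN⟩ : ∃ N, ∀ t, N ≤ t → E t < Tc R ℓ (g t) := by
      rw [Set.not_infinite] at hinf
      rcases hinf.bddAbove with ⟨N, hNb⟩
      refine ⟨N + 1, fun t ht => lt_of_le_of_ne (hEbound t) (fun hc => ?_)⟩
      have := hNb (show t ∈ {t | E t = Tc R ℓ (g t)} from hc)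
      omega
    set σs : ℕ → ℕ := fun u =>
      Nat.findGreatest (fun σ => vgen R ℓ (g u) σ (Tc R ℓ (g u)) ≤ E u) (g u) with hσdef
    have key : ∀ u, N + 1 ≤ u →
        g (u - 1) ≤ σs u ∧ σs u < g u ∧
        vgen R ℓ (g u) (σs u) (Tc R ℓ (g u)) = E u ∧
        tr R (σs u) (g u) (topAddr (Sj R (g u)) (ℓ + 1)) = topAddr (Sj R (σs u)) (ℓ + 1) ∧
        (∀ σ, σs u < σ → σ ≤ g u → E u + 1 ≤ vgen R ℓ (g u) σ (Tc R ℓ (g u))) := by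
      intro u hu
      have hlow : vgen R ℓ (g u) (g (u - 1)) (Tc R ℓ (g u)) ≤ E u := by
        have h1 : vgen R ℓ (g u) (g (u - 1)) (Tc R ℓ (g u)) = E (u - 1) :=
          hEe (u - 1) u (by omega)
        rw [h1]
        exact hEmono (u - 1) u (by omega)
      have hglem : g (u - 1) ≤ g u := hg.monotone (by omega)
      have hσs : σs u = Nat.findGreatest
          (fun σ => vgen R ℓ (g u) σ (Tc R ℓ (g u)) ≤ E u) (g u) := rfl
      have h1 : g (u - 1) ≤ σs u := by
        rw [hσs]; exact Nat.le_findGreatest hglem hlow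
      have h2 : vgen R ℓ (g u) (σs u) (Tc R ℓ (g u)) ≤ E u := by
        have h := Nat.findGreatest_spec
          (P := fun σ => vgen R ℓ (g u) σ (Tc R ℓ (g u)) ≤ E u) (n := g u) hglem hlow
        rw [hσs]
        simpa using h
      have h3 : σs u ≤ g u := by
        rw [hσs]; exact Nat.findGreatest_le _
      have h4 : σs u < g u := by
        rcases Nat.eq_or_lt_of_le h3 with heq | hlt
        · exfalso
          rw [heq, vgen_self] at h2
          have := hN u (by omega)
          omega
        · exact hlt
      have h5 : ¬ (vgen R ℓ (g u) (σs u + 1) (Tc R ℓ (g u)) ≤ E u) := by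
        have h := Nat.findGreatest_is_greatest
          (P := fun σ => vgen R ℓ (g u) σ (Tc R ℓ (g u)) ≤ E u) (n := g u)
          (k := σs u + 1) (by rw [← hσs]; omega) (by omega)
        simpa using h
      rcases vgen_step R hℓ h4 (Tc R ℓ (g u)) with heq | ⟨hfa, hfb, hfc, hfd, hfe⟩
      · exfalso
        rw [heq] at h2
        exact h5 h2
      · have hvEq : vgen R ℓ (g u) (σs u) (Tc R ℓ (g u)) = E u := by omega
        refine ⟨h1, h4, hvEq, ?_, ?_⟩
        · rw [toprep R hℓ]
          exact hfd
        · intro σ hσ1 hσ2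
          have := vgen_time_mono R hℓ (show σs u + 1 ≤ σ by omega) hσ2 (Tc R ℓ (g u))
          omega
    -- the contact points are pairwise (ℓ+1)-upper
    have hpair : ∀ u u', N + 1 ≤ u → u < u' →
        tr R (σs u) (σs u') (topAddr (Sj R (σs u')) (ℓ + 1)) =
          topAddr (Sj R (σs u)) (ℓ + 1) := by
      intro u u' hu huu'
      obtain ⟨k1, k2, k3, k4, k5⟩ := key u hu
      obtain ⟨k1', k2', k3', k4', k5'⟩ := key u' (by omega)
      have horder : σs u ≤ σs u' := by
        have : g u ≤ g (u' - 1) := hg.monotone (by omega)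
        omega
      -- the frozen second trace
      have hVp : ∀ d σ, σs u ≤ σ → σ + d = g u → vgen R ℓ (g u) σ (E u) = E u := by
        intro d
        induction d with
        | zero =>
          intro σ _ hσ
          have : σ = g u := by omega
          rw [this, vgen_self]
        | succ d ih =>
          intro σ hσ1 hσ2
          have hlt : σ < g u := by omega
          have hIH : vgen R ℓ (g u) (σ + 1) (E u) = E u := ih (σ + 1) (by omega) (by omega)
          rcases vgen_step R hℓ hlt (E u) with heq | ⟨_, _, hfc', _, hfe'⟩
          · rw [heq, hIH]
          · exfalso
            rw [hIH] at hfe'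
            obtain ⟨w, hw⟩ := vgen_ok R hℓ (show σ + 1 ≤ g u by omega)
            have hb := coord_lt_sizeAt hw
            rw [hfe'] at hb
            have := k5 (σ + 1) (by omega) (by omega)
            omega
      -- assemble
      rw [← k4']
      rw [← tr_comp R horder (by omega)]
      rw [toprep R hℓ]
      rw [tr_comp R (show σs u ≤ g u by omega) (hg.monotone (le_of_lt huu')),
        vgen_decomp R hℓ, hpre u u' (le_of_lt huu'), hEe u u' huu']
      rw [vgen_decomp R hℓ, hVp (g u - σs u) (σs u) le_rfl (by omega), ← k3]
      rw [← vgen_decomp R hℓ, ← toprep R hℓ]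
      exact k4
    refine ⟨fun s => σs (N + 1 + s), ?_, ?_⟩
    · have hstep : ∀ s, σs (N + 1 + s) < σs (N + 1 + s + 1) := by
        intro s
        obtain ⟨_, k2, _, _, _⟩ := key (N + 1 + s) (by omega)
        obtain ⟨k1', _, _, _, _⟩ := key (N + 1 + s + 1) (by omega)
        have : g (N + 1 + s) ≤ g (N + 1 + s + 1 - 1) := hg.monotone (by omega)
        omega
      exact strictMono_nat_of_lt_succ hstep
    · intro t u htu
      exact hpair (N + 1 + t) (N + 1 + u) (by omega) (by omega)

end Stmt18Core
section Stmt18Final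

variable {n : ℕ} {A Γ : Type} {D : DPDA n A Γ}

/-- The induction step: a pairwise `ℓ`-upper family yields a pairwise
`(ℓ+1)`-upper family. -/
lemma pairup_succ (R : InfRun D) (ℓ : ℕ) (hℓ : ℓ < n) (g : ℕ → ℕ) (hg : StrictMono g)
    (hup : PairUp R g ℓ) : ∃ g', StrictMono g' ∧ PairUp R g' (ℓ + 1) := by
  classical
  have hpre : ∀ t u, t ≤ u → pregen R ℓ (g u) (g t) = wpre R ℓ (g t) := by
    intro t u htu
    rcases Nat.eq_or_lt_of_le htu with rfl | hlt
    · exact pregen_self R ℓ (g t)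
    · exact hup t u hlt
  -- monotonicity of the trace coordinate in the endpoint
  have hemono : ∀ t u u', t < u → u ≤ u' →
      vgen R ℓ (g u') (g t) (Tc R ℓ (g u')) ≤ vgen R ℓ (g u) (g t) (Tc R ℓ (g u)) := by
    intro t u u' htu huu
    rcases Nat.eq_or_lt_of_le huu with rfl | hlt
    · exact le_rfl
    · have hcomp : vgen R ℓ (g u') (g t) (Tc R ℓ (g u')) =
          vgen R ℓ (g u) (g t) (vgen R ℓ (g u') (g u) (Tc R ℓ (g u'))) :=
        vgen_comp R hℓ (hg.monotone (le_of_lt htu)) (hg.monotone (le_of_lt hlt)) _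
          (hpre u u' (le_of_lt hlt))
      rw [hcomp]
      exact vgen_mono R hℓ _ _
        (vgen_le_Tc R hℓ (hg.monotone (le_of_lt hlt)) (hpre u u' (le_of_lt hlt)))
  -- the stabilized value of the trace coordinate
  have hatt : ∀ t, ∃ u, t < u ∧ vgen R ℓ (g u) (g t) (Tc R ℓ (g u)) =
      sInf {m | ∃ u, t < u ∧ vgen R ℓ (g u) (g t) (Tc R ℓ (g u)) = m} := by
    intro t
    have hne : {m | ∃ u, t < u ∧ vgen R ℓ (g u) (g t) (Tc R ℓ (g u)) = m}.Nonempty :=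
      ⟨_, ⟨t + 1, by omega, rfl⟩⟩
    obtain ⟨u, hu1, hu2⟩ := Nat.sInf_mem hne
    exact ⟨u, hu1, hu2⟩
  set u₀f : ℕ → ℕ := fun t => Classical.choose (hatt t) with hu₀def
  have hu₀ : ∀ t, t < u₀f t ∧ vgen R ℓ (g (u₀f t)) (g t) (Tc R ℓ (g (u₀f t))) =
      sInf {m | ∃ u, t < u ∧ vgen R ℓ (g u) (g t) (Tc R ℓ (g u)) = m} :=
    fun t => Classical.choose_spec (hatt t)
  have hstable : ∀ t u, u₀f t ≤ u →
      vgen R ℓ (g u) (g t) (Tc R ℓ (g u)) =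
        vgen R ℓ (g (u₀f t)) (g t) (Tc R ℓ (g (u₀f t))) := by
    intro t u huu
    have ht : t < u₀f t := (hu₀ t).1
    have h1 : vgen R ℓ (g u) (g t) (Tc R ℓ (g u)) ≤
        vgen R ℓ (g (u₀f t)) (g t) (Tc R ℓ (g (u₀f t))) :=
      hemono t (u₀f t) u (hu₀ t).1 huu
    have h2 : sInf {m | ∃ u, t < u ∧ vgen R ℓ (g u) (g t) (Tc R ℓ (g u)) = m} ≤
        vgen R ℓ (g u) (g t) (Tc R ℓ (g u)) :=
      Nat.sInf_le ⟨u, by omega, rfl⟩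
    have h3 := (hu₀ t).2
    omega
  -- the thinning function
  set hfun : ℕ → ℕ := fun s => Nat.rec 0
    (fun _ prev => max (prev + 1) ((Finset.range (prev + 1)).sup u₀f)) s with hfdef
  have hsucc : ∀ s, hfun (s + 1) =
      max (hfun s + 1) ((Finset.range (hfun s + 1)).sup u₀f) := fun s => rfl
  have hfstrict : StrictMono hfun := by
    apply strictMono_nat_of_lt_succ
    intro s
    rw [hsucc]
    omega
  have hdom : ∀ s s', s < s' → u₀f (hfun s) ≤ hfun s' := by
    intro s s' hss
    have h1 : hfun (s + 1) ≤ hfun s' := hfstrict.monotone hss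
    have h2 : u₀f (hfun s) ≤ (Finset.range (hfun s + 1)).sup u₀f :=
      Finset.le_sup (Finset.mem_range.mpr (by omega))
    rw [hsucc] at h1
    omega
  apply pairup_succ_core R ℓ hℓ (fun s => g (hfun s))
    (fun a b hab => hg (hfstrict hab))
    (fun t u htu => hup (hfun t) (hfun u) (hfstrict htu))
  intro t u u' htu huu
  rw [hstable (hfun t) (hfun u) (hdom t u htu),
    hstable (hfun t) (hfun u') (hdom t u' (by omega))]

/-- Every infinite run admits an infinite pairwise `ℓ`-upper family, `ℓ ≤ n`. -/
lemma pairup_exists (R : InfRun D) : ∀ ℓ, ℓ ≤ n → ∃ g, StrictMono g ∧ PairUp R g ℓ := by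
  intro ℓ
  induction ℓ with
  | zero => exact fun _ => ⟨id, strictMono_id, pairup_zero R⟩
  | succ ℓ ih =>
    intro hℓ
    obtain ⟨g, hg, hup⟩ := ih (by omega)
    exact pairup_succ R ℓ (by omega) g hg hup

end Stmt18Final
/-- Let `D` be an `n`-DPDA whose input alphabet contains a
distinguished symbol `⋆`.  If `R` is an infinite run of `D` reading only `⋆` symbols,
then `R(i)` is a milestone configuration for infinitely many indices `i`. -/
theorem statement18 {n : ℕ} (hn : 1 ≤ n) {A Γ : Type} [Finite A] [Finite Γ]
    {D : DPDA n A Γ} (star : A) (R : InfRun D)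
    (hw : ∀ i, OnlyStar star (R.lab i)) :
    {i : ℕ | Milestone star (R.cfg i)}.Infinite := by
  obtain ⟨g, hg, hup⟩ := pairup_exists R n le_rfl
  apply Set.infinite_of_injective_forall_mem (f := g) hg.injective
  intro t
  exact milestone_of_upper R star hw g hg hup t

end HOPDA
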